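/- Let p be an odd prime and Π a two-dimensional left ideal of the quaternion algebra H̄ = (−1,−1) over F_p. Then the kernel of the reduced trace restricted to Π is exactly one-dimensional; i.e., up to scaling there is a unique nonzero trace-zero element t = xi + yj + zk in Π. -/

import Mathlib

open Quaternion in
private lemma quat_aux_re {R : Type*} [CommRing R] (x : ℍ[R]) :
    ∃ a b c : ℍ[R], (a * x).re = x.imI ∧ (b * x).re = x.imJ ∧ (c * x).re = x.imK := by
  refine ⟨⟨0,-1,0,0⟩, ⟨0,0,-1,0⟩, ⟨0,0,0,-1⟩, ?_, ?_, ?_⟩ <;>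
    (erw [Quaternion.re_mul]; simp)

open Quaternion in
/-- In a two-dimensional left ideal `Π` of the quaternion algebra `(-1,-1)` over
`𝔽_p`, there is a unique nonzero trace-zero element up to scaling. -/
theorem traceZero_in_ideal_unique (p : ℕ) [Fact p.Prime] (hp : Odd p)
    (J : Ideal ℍ[ZMod p])
    (hdim : Module.finrank (ZMod p) (Submodule.restrictScalars (ZMod p) J) = 2) :
    ∃ v : ℍ[ZMod p], v ∈ J ∧ v ≠ 0 ∧ v.re = 0 ∧
      ∀ w ∈ J, w.re = 0 → ∃ c : ZMod p, w = c • v := by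
  classical
  let f : (Submodule.restrictScalars (ZMod p) J) →ₗ[ZMod p] ZMod p :=
    { toFun := fun v => (v : ℍ[ZMod p]).re
      map_add' := by intro a b; simp
      map_smul' := by intro c a; simp }
  have hf : f ≠ 0 := by
    intro h0
    have hre : ∀ x ∈ J, (x : ℍ[ZMod p]).re = 0 := by
      intro x hx
      have := DFunLike.congr_fun h0 (⟨x, hx⟩ : Submodule.restrictScalars (ZMod p) J)
      exact this
    have hbot : J = ⊥ := by
      rw [eq_bot_iff]
      intro x hx
      have h1 : x.re = 0 := hre x hx
      obtain ⟨a, b, c, ha, hb, hc⟩ := quat_aux_re x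
      have h2 : x.imI = 0 := by
        rw [← ha]; exact hre _ (by simpa [smul_eq_mul] using J.smul_mem a hx)
      have h3 : x.imJ = 0 := by
        rw [← hb]; exact hre _ (by simpa [smul_eq_mul] using J.smul_mem b hx)
      have h4 : x.imK = 0 := by
        rw [← hc]; exact hre _ (by simpa [smul_eq_mul] using J.smul_mem c hx)
      have : x = 0 := by ext <;> simp [h1, h2, h3, h4]
      simp [this]
    rw [hbot] at hdim
    rw [Submodule.restrictScalars_bot, finrank_bot] at hdim
    omega
  obtain ⟨v0, hv0⟩ : ∃ v0, f v0 ≠ 0 := by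
    by_contra h
    push_neg at h
    exact hf (by ext w; simpa using h w)
  have hrange : LinearMap.range f = ⊤ := by
    rw [LinearMap.range_eq_top]
    intro c
    refine ⟨(c * (f v0)⁻¹) • v0, ?_⟩
    rw [map_smul, smul_eq_mul, mul_assoc, inv_mul_cancel₀ hv0, mul_one]
  have hker : Module.finrank (ZMod p) (LinearMap.ker f) = 1 := by
    have hrn := LinearMap.finrank_range_add_finrank_ker f
    rw [hrange, hdim, finrank_top] at hrn
    simp at hrn
    omega
  rw [finrank_eq_one_iff'] at hker
  obtain ⟨⟨⟨v, hvJ⟩, hvker⟩, hvne, hspan⟩ := hker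
  refine ⟨v, hvJ, ?_, ?_, ?_⟩
  · intro h
    apply hvne
    exact Subtype.ext (Subtype.ext h)
  · exact hvker
  · intro w hwJ hwre
    obtain ⟨c, hc⟩ := hspan ⟨⟨w, hwJ⟩, by exact hwre⟩
    refine ⟨c, ?_⟩
    have := congrArg (fun z : LinearMap.ker f =>
      ((z : Submodule.restrictScalars (ZMod p) J) : ℍ[ZMod p])) hc
    simpa using this.symm
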